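/- Let m ≥ 2 and let M ∈ ℝ^{(m−1)×(m−1)} be symmetric and invertible. Then there is at most one symmetric matrix G ∈ ℝ^{m×m} satisfying diag(0, M) · G = I − 𝟙 e₀ᵀ and G 𝟙 = 0; namely, any such G equals the block matrix [[𝟙ᵀ M⁻¹ 𝟙, −𝟙ᵀ M⁻¹], [−M⁻¹ 𝟙, M⁻¹]]. -/

import Mathlib

open Matrix

/-- For `m ≥ 2` (here `m = e + 1` with `e ≥ 1`, and the index set is
`Unit ⊕ Fin e`, the `Unit` summand playing the role of index `0`) and `M` symmetric
and invertible, any symmetric `G` with `diag(0, M) · G = I - 𝟙 e₀ᵀ` and `G 𝟙 = 0`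
equals the block matrix `[[𝟙ᵀM⁻¹𝟙, -𝟙ᵀM⁻¹], [-M⁻¹𝟙, M⁻¹]]`. -/
theorem block_green_matrix_unique (e : ℕ) (he : 1 ≤ e)
    (M : Matrix (Fin e) (Fin e) ℝ)
    (hMsymm : M.IsSymm) (hMinv : IsUnit M.det)
    (G : Matrix (Unit ⊕ Fin e) (Unit ⊕ Fin e) ℝ)
    (hGsymm : G.IsSymm)
    (hG1 : Matrix.fromBlocks (0 : Matrix Unit Unit ℝ) 0 0 M * G =
      1 - Matrix.vecMulVec (fun _ => 1) (Pi.single (Sum.inl () : Unit ⊕ Fin e) 1))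
    (hG2 : G *ᵥ (fun _ => 1) = 0) :
    G = Matrix.fromBlocks
        (Matrix.of fun _ _ : Unit => (fun _ => (1 : ℝ)) ⬝ᵥ (M⁻¹ *ᵥ fun _ => 1))
        (Matrix.of fun (_ : Unit) j => -(((fun _ => (1 : ℝ)) ᵥ* M⁻¹) j))
        (Matrix.of fun i (_ : Unit) => -((M⁻¹ *ᵥ fun _ => (1 : ℝ)) i))
        M⁻¹ := by
  have hM' : M⁻¹ * M = 1 := Matrix.nonsing_inv_mul M hMinv
  have hMisymm : M⁻¹.IsSymm := by
    rw [Matrix.IsSymm, Matrix.transpose_nonsing_inv, hMsymm.eq]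
  have key : ∀ (i : Fin e) (x : Unit ⊕ Fin e),
      ∑ k, M i k * G (Sum.inr k) x =
      (if (Sum.inr i : Unit ⊕ Fin e) = x then 1 else 0) -
        (Pi.single (Sum.inl ()) 1 : Unit ⊕ Fin e → ℝ) x := by
    intro i x
    have h := Matrix.ext_iff.mpr hG1 (Sum.inr i) x
    simpa [Matrix.mul_apply, Fintype.sum_sum_type, Matrix.fromBlocks,
      Matrix.sub_apply, Matrix.one_apply, Matrix.vecMulVec_apply] using h
  have hMH : M * (G.submatrix Sum.inr Sum.inr) = 1 := by
    ext i j
    have h := key i (Sum.inr j)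
    simp only [Matrix.mul_apply, Matrix.submatrix_apply]
    rw [h]
    by_cases hij : i = j <;> simp [hij, Matrix.one_apply]
  have hH : G.submatrix Sum.inr Sum.inr = M⁻¹ := by
    calc G.submatrix Sum.inr Sum.inr = (M⁻¹ * M) * G.submatrix Sum.inr Sum.inr := by
          rw [hM', Matrix.one_mul]
      _ = M⁻¹ * (M * G.submatrix Sum.inr Sum.inr) := by rw [Matrix.mul_assoc]
      _ = M⁻¹ := by rw [hMH, Matrix.mul_one]
  have hMv : M *ᵥ (fun k => G (Sum.inr k) (Sum.inl ())) = fun _ => (-1 : ℝ) := by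
    funext i
    have h := key i (Sum.inl ())
    simp only [Matrix.sub_apply, Matrix.one_apply, Matrix.vecMulVec_apply,
      Pi.single_apply] at h
    simpa [Matrix.mulVec, dotProduct] using h
  have hv : ∀ i, G (Sum.inr i) (Sum.inl ()) = -((M⁻¹ *ᵥ fun _ => (1:ℝ)) i) := by
    intro i
    have h1 : (fun k => G (Sum.inr k) (Sum.inl ())) =
        M⁻¹ *ᵥ (M *ᵥ (fun k => G (Sum.inr k) (Sum.inl ()))) := by
      rw [Matrix.mulVec_mulVec, hM', Matrix.one_mulVec]
    have h2 := congrFun h1 i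
    rw [hMv] at h2
    have : (fun _ => (-1:ℝ) : Fin e → ℝ) = -(fun _ => (1:ℝ)) := by funext _; simp
    rw [this, Matrix.mulVec_neg] at h2
    simpa using h2
  have hsym : ∀ a b, G a b = G b a := fun a b => hGsymm.apply b a
  have hcorner : G (Sum.inl ()) (Sum.inl ()) =
      (fun _ => (1:ℝ)) ⬝ᵥ (M⁻¹ *ᵥ fun _ => 1) := by
    have h := congrFun hG2 (Sum.inl ())
    simp only [Matrix.mulVec, dotProduct, Fintype.sum_sum_type, Pi.zero_apply,
      mul_one] at h
    have h' : G (Sum.inl ()) (Sum.inl ()) = -∑ j, G (Sum.inl ()) (Sum.inr j) := by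
      simp at h; linarith [h]
    rw [h']
    simp only [dotProduct, one_mul]
    rw [← Finset.sum_neg_distrib]
    congr 1; funext j
    rw [hsym (Sum.inl ()) (Sum.inr j), hv j]; ring
  ext a b
  cases a with
  | inl u =>
    cases b with
    | inl u' =>
      cases u; cases u'
      simpa using hcorner
    | inr j =>
      have h1 : ((fun _ => (1:ℝ)) ᵥ* M⁻¹) j = (M⁻¹ *ᵥ fun _ => (1:ℝ)) j := by
        simp only [Matrix.vecMul, Matrix.mulVec, dotProduct, one_mul, mul_one]
        exact Finset.sum_congr rfl fun i _ => (congrFun (congrFun hMisymm.eq i) j) ▸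
          Matrix.transpose_apply M⁻¹ i j
      cases u
      rw [hsym (Sum.inl ()) (Sum.inr j), hv j]
      simp [h1]
  | inr i =>
    cases b with
    | inl u' =>
      cases u'
      simpa using hv i
    | inr j =>
      have := Matrix.ext_iff.mpr hH i j
      simpa using this
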